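/- Let (F, ‖·‖) be a finite, positively polarizable, strictly hyperbolic proper hyperbolically normed cone with some t* ∈ F of norm 1, and suppose there exists t ∈ core(F) with ‖t‖ = 1, where core(F) = {x ∈ F : ∀ v ∈ span(F) ∃ ε > 0, x + εv ∈ F}. Then the induced inner product ⟨·,·⟩ on span(F) is Lorentzian. -/
import Mathlib


/-- A linear cone over `ℝ`: a commutative cancellative monoid with scalar
multiplication by real numbers, subject to the usual axioms for nonnegative scalars. -/
class RealLinearCone (F : Type*) [AddCancelCommMonoid F] where
  csmul : ℝ → F → F
  csmul_add : ∀ {a : ℝ}, 0 ≤ a → ∀ v w : F, csmul a (v + w) = csmul a v + csmul a w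
  add_csmul : ∀ {a b : ℝ}, 0 ≤ a → 0 ≤ b → ∀ v : F, csmul (a + b) v = csmul a v + csmul b v
  mul_csmul : ∀ {a b : ℝ}, 0 ≤ a → 0 ≤ b → ∀ v : F, csmul a (csmul b v) = csmul (a * b) v
  one_csmul : ∀ v : F, csmul 1 v = v

/-- The pairing induced by a (finite-valued) hyperbolic norm via polarization:
`⟨v,w⟩ = ½(‖v+w‖² - ‖v‖² - ‖w‖²)`. -/
noncomputable def hInner {F : Type*} [AddCancelCommMonoid F] (nn : F → ℝ) (v w : F) : ℝ :=
  ((nn (v + w)) ^ 2 - (nn v) ^ 2 - (nn w) ^ 2) / 2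

/-- A symmetric bilinear form `B` on a real vector space `V` is Lorentzian if `V`
decomposes as a direct sum of a one-dimensional subspace on which `B` is positive
definite and a complement on which `B` is negative definite. -/
def IsLorentzian {V : Type*} [AddCommGroup V] [Module ℝ V] (B : V →ₗ[ℝ] V →ₗ[ℝ] ℝ) : Prop :=
  ∃ V₁ V₂ : Submodule ℝ V, IsCompl V₁ V₂ ∧ Module.finrank ℝ V₁ = 1 ∧
    (∀ x ∈ V₁, x ≠ 0 → 0 < B x x) ∧ (∀ x ∈ V₂, x ≠ 0 → B x x < 0)

/-- Let `(F, ‖·‖)` be a finite, positively polarizable, strictly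
hyperbolic proper hyperbolically normed cone containing a norm-one element, and
suppose there exists `t ∈ core(F)` with `‖t‖ = 1` (every direction in the span can be
followed a little from `t` while staying in `F`). Then the symmetric bilinear form `B`
induced on the span `V` of `F` is Lorentzian. -/
theorem core_implies_lorentzian {F : Type*} [AddCancelCommMonoid F] [RealLinearCone F]
    (nn : F → ℝ)
    (hproper : ∀ v w : F, v + w = 0 → v = 0)
    (hnonneg : ∀ v : F, 0 ≤ nn v)
    (hrev : ∀ v w : F, nn v + nn w ≤ nn (v + w))
    (hhom : ∀ a : ℝ, 0 ≤ a → ∀ v : F, nn (RealLinearCone.csmul a v) = a * nn v)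
    (hpol : ∀ v w : F, (nn (v + RealLinearCone.csmul 2 w)) ^ 2 + (nn v) ^ 2
      = 2 * (nn (v + w)) ^ 2 + 2 * (nn w) ^ 2)
    (hstrict : ∀ u v : F, nn (u + v) = nn u + nn v →
      ∃ lam : ℝ, 0 ≤ lam ∧ (u = RealLinearCone.csmul lam v ∨ v = RealLinearCone.csmul lam u))
    (tstar : F) (htstar : nn tstar = 1)
    {V : Type*} [AddCommGroup V] [Module ℝ V] (ι : F → V)
    (hι_inj : Function.Injective ι)
    (hι_add : ∀ v w : F, ι (v + w) = ι v + ι w)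
    (hι_smul : ∀ a : ℝ, 0 ≤ a → ∀ v : F, ι (RealLinearCone.csmul a v) = a • ι v)
    (hgen : ∀ x : V, ∃ v w : F, x = ι v - ι w)
    (B : V →ₗ[ℝ] V →ₗ[ℝ] ℝ)
    (hsymm : ∀ x y : V, B x y = B y x)
    (hext : ∀ v w : F, B (ι v) (ι w) = hInner nn v w)
    (t : F) (ht : nn t = 1)
    (hcore : ∀ x : V, ∃ ε : ℝ, 0 < ε ∧ ∃ u : F, ι t + ε • x = ι u) :
    IsLorentzian B := by
  classical
  set τ := ι t with hτdef
  -- squared-norm identity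
  have hsq : ∀ u : F, B (ι u) (ι u) = (nn u) ^ 2 := by
    intro u
    have h2 : u + u = RealLinearCone.csmul (2:ℝ) u := by
      have h := RealLinearCone.add_csmul (a := (1:ℝ)) (b := (1:ℝ))
        zero_le_one zero_le_one u
      rw [RealLinearCone.one_csmul] at h
      norm_num at h
      exact h.symm
    rw [hext]
    unfold hInner
    rw [h2, hhom 2 (by norm_num)]
    ring
  have hBtt : B τ τ = 1 := by rw [hτdef, hsq t, ht]; norm_num
  have hτ0 : τ ≠ 0 := by
    intro h
    rw [h] at hBtt
    simp at hBtt
  refine ⟨Submodule.span ℝ {τ}, LinearMap.ker (B τ), ?_, ?_, ?_, ?_⟩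
  · constructor
    · rw [Submodule.disjoint_def]
      intro x hx1 hx2
      obtain ⟨c, rfl⟩ := Submodule.mem_span_singleton.mp hx1
      have : B τ (c • τ) = 0 := hx2
      rw [map_smul, smul_eq_mul, hBtt, mul_one] at this
      rw [this, zero_smul]
    · rw [codisjoint_iff, eq_top_iff]
      intro x _
      have hmem : x - (B τ x) • τ ∈ LinearMap.ker (B τ) := by
        simp [map_sub, map_smul, hBtt]
      have : x = (B τ x) • τ + (x - (B τ x) • τ) := by abel
      rw [this]
      exact Submodule.add_mem_sup
        (Submodule.smul_mem _ _ (Submodule.mem_span_singleton_self τ)) hmem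
  · exact finrank_span_singleton hτ0
  · intro x hx hx0
    obtain ⟨c, rfl⟩ := Submodule.mem_span_singleton.mp hx
    have hc : c ≠ 0 := by
      intro h; rw [h, zero_smul] at hx0; exact hx0 rfl
    have : B (c • τ) (c • τ) = c ^ 2 := by
      simp only [map_smul, LinearMap.smul_apply, smul_eq_mul, hBtt]
      ring
    rw [this]
    positivity
  · intro x hx hx0
    have hko : B τ x = 0 := hx
    obtain ⟨ε, hε, u, hu⟩ := hcore x
    -- B (ι u) (ι u) = 1 + ε² B x x
    have hιu : ι u = τ + ε • x := hu.symm
    have hBuu : B (ι u) (ι u) = 1 + ε ^ 2 * B x x := by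
      rw [hιu]
      simp only [map_add, map_smul, LinearMap.add_apply, LinearMap.smul_apply,
        smul_eq_mul, hBtt, hko, hsymm x τ, hko]
      ring
    -- B τ (ι u) = 1
    have hBtu : B τ (ι u) = 1 := by
      rw [hιu]
      simp [map_add, map_smul, hBtt, hko]
    -- hInner t u ≥ nn u
    have hlow : nn u ≤ B τ (ι u) := by
      rw [hτdef, hext]
      unfold hInner
      have h1 : 1 + nn u ≤ nn (t + u) := by
        have := hrev t u; rw [ht] at this; exact this
      have h2 : (1 + nn u) ^ 2 ≤ (nn (t + u)) ^ 2 := by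
        have h0 : (0:ℝ) ≤ 1 + nn u := by linarith [hnonneg u]
        nlinarith
      rw [ht]
      nlinarith
    have hnu1 : nn u ≤ 1 := by rw [hBtu] at hlow; exact hlow
    have hle : B x x ≤ 0 := by
      have : (nn u) ^ 2 ≤ 1 := by nlinarith [hnonneg u]
      rw [hsq u] at hBuu
      nlinarith [pow_pos hε 2]
    rcases lt_or_eq_of_le hle with h | h
    · exact h
    -- B x x = 0 case: derive contradiction
    exfalso
    have hnu : nn u = 1 := by
      have : (nn u) ^ 2 = 1 := by rw [hsq u] at hBuu; rw [hBuu, h]; ring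
      nlinarith [hnonneg u]
    -- then nn (t+u) = nn t + nn u
    have heq : nn (t + u) = nn t + nn u := by
      have hInval : hInner nn t u = 1 := by rw [← hext, ← hτdef, hBtu]
      unfold hInner at hInval
      have h4 : (nn (t + u)) ^ 2 = 4 := by nlinarith [hInval, hnu, ht]
      have h5 : nn (t + u) = 2 := by nlinarith [hnonneg (t + u), h4]
      rw [h5, ht, hnu]; norm_num
    obtain ⟨lam, hlam, hcase⟩ := hstrict t u heq
    have htu : t = u := by
      rcases hcase with hc | hc
      · have : nn t = lam * nn u := by rw [hc, hhom lam hlam]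
        rw [ht, hnu, mul_one] at this
        rw [hc, ← this, RealLinearCone.one_csmul]
      · have : nn u = lam * nn t := by rw [hc, hhom lam hlam]
        rw [ht, hnu, mul_one] at this
        rw [hc, ← this, RealLinearCone.one_csmul]
    rw [← htu] at hιu
    have : ε • x = 0 := by
      have := hιu
      rw [← hτdef] at this
      have h0 : τ + ε • x = τ + 0 := by rw [add_zero, ← this]
      exact add_left_cancel h0
    have := smul_eq_zero.mp this
    rcases this with h' | h'
    · exact absurd h' (ne_of_gt hε)
    · exact hx0 h'
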